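/- arXiv:2506.20508 — 3 statements merged into one kernel-verified Lean document; each statement's English description precedes it below -/
import Mathlib

section
/- Let P be a simple polygon in ℝ² in general position, and let q, t ∈ P be points with segment ℝ q t ⊆ P, openSegment ℝ q t ⊄ interior P, and openSegment ℝ q t ∩ interior P ≠ ∅. Then some reflex vertex of P lies on openSegment ℝ q t. -/
open scoped RealInnerProductSpace symmDiff
open Metric Set MeasureTheory

noncomputable section

abbrev Pt : Type := EuclideanSpace ℝ (Fin 2)

/-- The cyclic successor on `Fin n`. -/
def nxt {n : ℕ} (i : Fin n) : Fin n := ⟨(i.1 + 1) % n, Nat.mod_lt _ i.pos⟩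

/-- The cyclic predecessor on `Fin n`. -/
def prv {n : ℕ} (i : Fin n) : Fin n := ⟨(i.1 + n - 1) % n, Nat.mod_lt _ i.pos⟩

/-- A simple polygon in the plane: at least 3 vertices, injective vertex map,
adjacent edges meet exactly in their common vertex, non-adjacent edges are disjoint. -/
structure SimplePolygon where
  n : ℕ
  hn : 3 ≤ n
  v : Fin n → Pt
  inj : Function.Injective v
  adj : ∀ i : Fin n,
    segment ℝ (v i) (v (nxt i)) ∩ segment ℝ (v (nxt i)) (v (nxt (nxt i))) = {v (nxt i)}
  nonadj : ∀ i j : Fin n, i ≠ j → j ≠ nxt i → i ≠ nxt j →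
    segment ℝ (v i) (v (nxt i)) ∩ segment ℝ (v j) (v (nxt j)) = ∅

namespace SimplePolygon

variable (Q : SimplePolygon)

/-- The `i`-th edge of the polygon. -/
def edge (i : Fin Q.n) : Set Pt := segment ℝ (Q.v i) (Q.v (nxt i))

/-- The boundary of the polygon: the union of its edges. -/
def bdry : Set Pt := ⋃ i, Q.edge i

/-- The polygon body: the boundary together with all points off the boundary whose
connected component in the complement of the boundary is bounded. -/
def body : Set Pt :=
  Q.bdry ∪ {z | z ∉ Q.bdry ∧ Bornology.IsBounded (connectedComponentIn Q.bdryᶜ z)}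

/-- A point `s` sees a point `t` if the open segment between them lies in the
interior of the polygon body. -/
def Sees (s t : Pt) : Prop := openSegment ℝ s t ⊆ interior Q.body

/-- The polygon is locally convex at vertex `v i`. -/
def LocallyConvexAt (i : Fin Q.n) : Prop :=
  ∃ ε > 0, Convex ℝ (Q.body ∩ Metric.ball (Q.v i) ε)

/-- A reflex vertex: the polygon is not locally convex there. -/
def IsReflex (i : Fin Q.n) : Prop := ¬ Q.LocallyConvexAt i

/-- Values `⟪n, s - r⟫ > 0` for distinct reflex vertices `r, s` and unit normal `n` such
that a small piece of the line with normal `n` through each of `r, s` is contained in the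
polygon body (short-width candidates). -/
def SWset : Set ℝ :=
  {d | ∃ i j : Fin Q.n, Q.IsReflex i ∧ Q.IsReflex j ∧ Q.v i ≠ Q.v j ∧
    ∃ nv : Pt, ‖nv‖ = 1 ∧ d = ⟪nv, Q.v j - Q.v i⟫ ∧ 0 < d ∧
      ∀ w ∈ ({Q.v i, Q.v j} : Set Pt), ∃ ε > 0,
        {z : Pt | ⟪nv, z - w⟫ = 0} ∩ Metric.ball w ε ⊆ Q.body}

/-- The short width of the polygon. -/
def SW : ℝ := sInf Q.SWset

/-- Values `⟪n, a - b⟫` for convex vertices `a, b` and unit vector `n` such that the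
whole polygon body lies between the lines through `b` and `a` with normal `n`
(long-width candidates). -/
def LWset : Set ℝ :=
  {d | ∃ i j : Fin Q.n, Q.LocallyConvexAt i ∧ Q.LocallyConvexAt j ∧
    ∃ nv : Pt, ‖nv‖ = 1 ∧ d = ⟪nv, Q.v i - Q.v j⟫ ∧
      ∀ z ∈ Q.body, ⟪nv, Q.v j⟫ ≤ ⟪nv, z⟫ ∧ ⟪nv, z⟫ ≤ ⟪nv, Q.v i⟫}

/-- The long width of the polygon. -/
def LW : ℝ := sSup Q.LWset

/-- General position: no three distinct vertices are collinear. -/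
def GeneralPosition : Prop :=
  ∀ i j k : Fin Q.n, Q.v i ≠ Q.v j → Q.v j ≠ Q.v k → Q.v i ≠ Q.v k →
    ¬ Collinear ℝ ({Q.v i, Q.v j, Q.v k} : Set Pt)

/-- The visibility polygon of a point `p`. -/
def VP (p : Pt) : Set Pt := {z ∈ Q.body | openSegment ℝ p z ⊆ interior Q.body}

/-- Vision stability with constant `γ`. -/
def VisionStable (γ : ℝ) : Prop :=
  ∀ p ∈ Q.body, ∀ q ∈ Q.body,
    volume (Q.VP p ∆ Q.VP q) ≤ ENNReal.ofReal (γ * dist p q)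

/-- The perimeter of the polygon. -/
def perim : ℝ := ∑ i, dist (Q.v i) (Q.v (nxt i))

end SimplePolygon
lemma aux_core (U : Set ℝ) (hU : IsOpen U) {a b : ℝ} (haU : a ∈ U) (hbU : b ∉ U)
    (ha : a ∈ Ioo (0:ℝ) 1) (hb : b ∈ Ioo (0:ℝ) 1) (hab : a < b) :
    ∃ s₀ ∈ Ioo (0:ℝ) 1, s₀ ∉ U ∧ ∀ δ > 0, ∃ s ∈ U ∩ Ioo (0:ℝ) 1, s ≠ s₀ ∧ |s - s₀| < δ := by
  set K : Set ℝ := Icc a b ∩ Uᶜ with hK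
  have hKc : IsClosed K := isClosed_Icc.inter hU.isClosed_compl
  have hKne : K.Nonempty := ⟨b, ⟨hab.le, le_refl b⟩, hbU⟩
  have hKbdd : BddBelow K := ⟨a, fun y hy => hy.1.1⟩
  obtain ⟨s₀, hs₀K, hs₀inf⟩ : ∃ s₀, s₀ ∈ K ∧ s₀ = sInf K := ⟨sInf K, hKc.csInf_mem hKne hKbdd, rfl⟩
  have has₀ : a < s₀ := lt_of_le_of_ne hs₀K.1.1 (by rintro rfl; exact hs₀K.2 haU)
  have hs₀b : s₀ ≤ b := hs₀K.1.2
  refine ⟨s₀, ⟨lt_trans ha.1 has₀, lt_of_le_of_lt hs₀b hb.2⟩, hs₀K.2, ?_⟩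
  intro δ hδ
  set s := max a (s₀ - δ/2) with hs
  have hss₀ : s < s₀ := max_lt has₀ (by linarith)
  have hsU : s ∈ U := by
    by_contra hc
    have hsK : s ∈ K := ⟨⟨le_max_left _ _, le_trans hss₀.le hs₀b⟩, hc⟩
    exact absurd (hs₀inf ▸ csInf_le hKbdd hsK) (not_le.mpr hss₀)
  refine ⟨s, ⟨hsU, ⟨lt_of_lt_of_le ha.1 (le_max_left _ _), lt_trans hss₀ (lt_of_le_of_lt hs₀b hb.2)⟩⟩, hss₀.ne, ?_⟩
  rw [abs_sub_lt_iff]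
  constructor <;> [linarith; (have := le_max_right a (s₀ - δ/2); linarith)]

lemma aux_gen (U : Set ℝ) (hU : IsOpen U) {a b : ℝ} (haU : a ∈ U) (hbU : b ∉ U)
    (ha : a ∈ Ioo (0:ℝ) 1) (hb : b ∈ Ioo (0:ℝ) 1) :
    ∃ s₀ ∈ Ioo (0:ℝ) 1, s₀ ∉ U ∧ ∀ δ > 0, ∃ s ∈ U ∩ Ioo (0:ℝ) 1, s ≠ s₀ ∧ |s - s₀| < δ := by
  rcases lt_trichotomy a b with h | h | h
  · exact aux_core U hU haU hbU ha hb h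
  · exact absurd (h ▸ haU) hbU
  · have hU' : IsOpen ((fun u : ℝ => 1 - u) ⁻¹' U) := hU.preimage (by fun_prop)
    have := aux_core _ hU' (a := 1 - a) (b := 1 - b)
      (by simpa using haU) (by simpa using hbU)
      ⟨by linarith [ha.2], by linarith [ha.1]⟩ ⟨by linarith [hb.2], by linarith [hb.1]⟩
      (by linarith)
    obtain ⟨c, hcI, hcU, happ⟩ := this
    refine ⟨1 - c, ⟨by linarith [hcI.2], by linarith [hcI.1]⟩, hcU, ?_⟩
    intro δ hδ
    obtain ⟨s, ⟨hsU, hsI⟩, hsne, hsδ⟩ := happ δ hδ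
    refine ⟨1 - s, ⟨hsU, ⟨by linarith [hsI.2], by linarith [hsI.1]⟩⟩, by intro hc; apply hsne; linarith, ?_⟩
    rw [abs_sub_lt_iff] at hsδ ⊢; constructor <;> linarith [hsδ.1, hsδ.2]

section AuxLemmas

lemma nxt_prv' {n : ℕ} (i : Fin n) : nxt (prv i) = i := by
  have hn : 1 ≤ n := i.pos
  have hlt := i.isLt
  apply Fin.ext
  show ((i.1 + n - 1) % n + 1) % n = i.1
  rw [Nat.mod_add_mod]
  have h1 : i.1 + n - 1 + 1 = i.1 + n := by omega
  rw [h1, Nat.add_mod_right, Nat.mod_eq_of_lt hlt]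

lemma prv_nxt' {n : ℕ} (i : Fin n) : prv (nxt i) = i := by
  have hn : 1 ≤ n := i.pos
  have hlt := i.isLt
  apply Fin.ext
  show ((i.1 + 1) % n + n - 1) % n = i.1
  have h1 : (i.1 + 1) % n + n - 1 = (i.1 + 1) % n + (n - 1) := by omega
  rw [h1, Nat.mod_add_mod]
  have h2 : i.1 + 1 + (n - 1) = i.1 + n := by omega
  rw [h2, Nat.add_mod_right, Nat.mod_eq_of_lt hlt]

lemma nxt_ne' {n : ℕ} (hn : 2 ≤ n) (i : Fin n) : nxt i ≠ i := by
  intro hc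
  have := congrArg Fin.val hc
  simp only [nxt] at this
  rcases Nat.lt_or_ge (i.1 + 1) n with h | h
  · rw [Nat.mod_eq_of_lt h] at this; omega
  · have hi := i.isLt
    have h2 : i.1 + 1 = n := by omega
    rw [h2, Nat.mod_self] at this
    omega

namespace SimplePolygon

variable (Q : SimplePolygon)

lemma edge_closed (i : Fin Q.n) : IsClosed (Q.edge i) := by
  rw [SimplePolygon.edge, segment_eq_image]
  exact (isCompact_Icc.image (by fun_prop)).isClosed

lemma bdry_closed : IsClosed Q.bdry :=
  isClosed_iUnion_of_finite Q.edge_closed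

lemma mem_body_iff (z : Pt) :
    z ∈ Q.body ↔ z ∈ Q.bdry ∨ (z ∉ Q.bdry ∧ Bornology.IsBounded (connectedComponentIn Q.bdryᶜ z)) :=
  Iff.rfl

lemma mem_interior_of_not_bdry {z : Pt} (hz : z ∈ Q.body) (hzb : z ∉ Q.bdry) :
    z ∈ interior Q.body := by
  have hopen : IsOpen (connectedComponentIn Q.bdryᶜ z) :=
    Q.bdry_closed.isOpen_compl.connectedComponentIn
  have hbdd : Bornology.IsBounded (connectedComponentIn Q.bdryᶜ z) := by
    rcases (Q.mem_body_iff z).mp hz with h | h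
    · exact absurd h hzb
    · exact h.2
  have hsub : connectedComponentIn Q.bdryᶜ z ⊆ Q.body := by
    intro y hy
    have hyc : y ∈ Q.bdryᶜ := connectedComponentIn_subset _ _ hy
    have heq := connectedComponentIn_eq hy
    exact (Q.mem_body_iff y).mpr (Or.inr ⟨hyc, heq ▸ hbdd⟩)
  exact mem_interior.mpr ⟨_, hsub, hopen, mem_connectedComponentIn hzb⟩

end SimplePolygon

end AuxLemmas

section HalfPlane

open scoped RealInnerProductSpace

lemma inner_linear (nv : Pt) : IsLinearMap ℝ (fun z : Pt => ⟪nv, z⟫) :=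
  ⟨fun a b => inner_add_right nv a b, fun c a => real_inner_smul_right nv a c⟩

lemma halfspace_convex (nv : Pt) (x : Pt) : Convex ℝ {z : Pt | 0 < ⟪nv, z - x⟫} := by
  have : {z : Pt | 0 < ⟪nv, z - x⟫} = {z : Pt | ⟪nv, x⟫ < ⟪nv, z⟫} := by
    ext z; simp [inner_sub_right, sub_pos]
  rw [this]
  exact convex_halfSpace_gt (inner_linear nv) _

lemma hyperplane_convex (nv : Pt) (x : Pt) : Convex ℝ {z : Pt | ⟪nv, z - x⟫ = 0} := by
  have : {z : Pt | ⟪nv, z - x⟫ = 0} = {z : Pt | (fun w => ⟪nv, w⟫) z = ⟪nv, x⟫} := by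
    ext z; simp [inner_sub_right, sub_eq_zero]
  rw [this]
  exact convex_hyperplane (inner_linear nv) _

/-- If one point of an open half-disc around `x` (with the boundary locally inside the
line through `x` with normal `nv`) is in the body, then the whole half-disc is. -/
lemma half_subset_body (Q : SimplePolygon) (x : Pt) (ε : ℝ) (nv : Pt)
    (hbd : Q.bdry ∩ Metric.ball x ε ⊆ {z : Pt | ⟪nv, z - x⟫ = 0})
    (w : Pt) (hw : w ∈ Metric.ball x ε) (hwb : w ∈ Q.body) (hwf : 0 < ⟪nv, w - x⟫) :
    ∀ y ∈ Metric.ball x ε, 0 < ⟪nv, y - x⟫ → y ∈ Q.body := by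
  set H : Set Pt := Metric.ball x ε ∩ {z : Pt | 0 < ⟪nv, z - x⟫} with hH
  have hHconv : Convex ℝ H := (convex_ball x ε).inter (halfspace_convex nv x)
  have hHsub : H ⊆ Q.bdryᶜ := by
    intro z hz hzb
    exact absurd (hbd ⟨hzb, hz.1⟩) (ne_of_gt hz.2)
  have hwH : w ∈ H := ⟨hw, hwf⟩
  have hcomp : H ⊆ connectedComponentIn Q.bdryᶜ w :=
    hHconv.isPreconnected.subset_connectedComponentIn hwH hHsub
  have hwnb : w ∉ Q.bdry := hHsub hwH
  have hbdd : Bornology.IsBounded (connectedComponentIn Q.bdryᶜ w) := by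
    rcases (Q.mem_body_iff w).mp hwb with h | h
    · exact absurd h hwnb
    · exact h.2
  intro y hy hyf
  have hyH : y ∈ H := ⟨hy, hyf⟩
  have heq := connectedComponentIn_eq (hcomp hyH)
  exact (Q.mem_body_iff y).mpr (Or.inr ⟨hHsub hyH, heq ▸ hbdd⟩)

lemma near_line_closure (x : Pt) (ε : ℝ) (nv : Pt) (hnv : nv ≠ 0)
    {z : Pt} (hz : z ∈ Metric.ball x ε) (hzf : ⟪nv, z - x⟫ = 0) :
    z ∈ closure (Metric.ball x ε ∩ {y : Pt | 0 < ⟪nv, y - x⟫}) := by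
  obtain ⟨ρ, hρ, hρsub⟩ := Metric.isOpen_iff.mp Metric.isOpen_ball z hz
  rw [Metric.mem_closure_iff]
  intro δ hδ
  have hnn : (0:ℝ) < ‖nv‖ := norm_pos_iff.mpr hnv
  set τ : ℝ := min δ ρ / (2 * (‖nv‖ + 1)) with hτ
  have hτpos : 0 < τ := by positivity
  refine ⟨z + τ • nv, ⟨hρsub ?_, ?_⟩, ?_⟩
  · rw [Metric.mem_ball, dist_eq_norm]
    have : z + τ • nv - z = τ • nv := by abel
    rw [this, norm_smul, Real.norm_eq_abs, abs_of_pos hτpos]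
    calc τ * ‖nv‖ < τ * (2 * (‖nv‖ + 1)) := by nlinarith
      _ = min δ ρ := by
        rw [hτ, div_mul_cancel₀]
        exact (by positivity : (0:ℝ) < 2 * (‖nv‖ + 1)).ne'
      _ ≤ ρ := min_le_right _ _
  · show 0 < ⟪nv, z + τ • nv - x⟫
    have : z + τ • nv - x = (z - x) + τ • nv := by abel
    rw [this, inner_add_right, hzf, real_inner_smul_right, real_inner_self_eq_norm_sq]
    positivity
  · rw [dist_eq_norm]
    have : z - (z + τ • nv) = -(τ • nv) := by abel
    rw [this, norm_neg, norm_smul, Real.norm_eq_abs, abs_of_pos hτpos]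
    calc τ * ‖nv‖ < τ * (2 * (‖nv‖ + 1)) := by nlinarith
      _ = min δ ρ := by
        rw [hτ, div_mul_cancel₀]
        exact (by positivity : (0:ℝ) < 2 * (‖nv‖ + 1)).ne'
      _ ≤ δ := min_le_left _ _

end HalfPlane

section OneSided

open scoped RealInnerProductSpace
open Metric Set

/-- If near `x` the body lies (weakly) on one side of a line through `x`, but points of the
open segment through `x` arbitrarily close to `x` are in the interior of the body, we get a
contradiction. -/
lemma onesided (Q : SimplePolygon)
    (q t : Pt) (hseg : segment ℝ q t ⊆ Q.body)
    (nv : Pt) (hnv : nv ≠ 0) (ε : ℝ) (hε : 0 < ε)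
    (s₀ : ℝ) (hs₀ : s₀ ∈ Ioo (0:ℝ) 1)
    (happ : ∀ δ > 0, ∃ s ∈ Ioo (0:ℝ) 1,
      (q + s • (t - q)) ∈ interior Q.body ∧ s ≠ s₀ ∧ |s - s₀| < δ)
    (hemp : ∀ w ∈ Metric.ball (q + s₀ • (t - q)) ε, w ∈ Q.body →
      0 ≤ ⟪nv, w - (q + s₀ • (t - q))⟫) : False := by
  set x : Pt := q + s₀ • (t - q) with hx
  set B : ℝ := ⟪nv, t - q⟫ with hB
  have hline : ∀ s : ℝ, ⟪nv, (q + s • (t - q)) - x⟫ = (s - s₀) * B := by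
    intro s
    have h1 : (q + s • (t - q)) - x = (s - s₀) • (t - q) := by
      rw [hx, sub_smul]; abel
    rw [h1, real_inner_smul_right]
  set δ₀ : ℝ := min (min s₀ (1 - s₀)) (ε / (‖t - q‖ + 1)) with hδ₀
  have hδ₀pos : 0 < δ₀ := by
    apply lt_min (lt_min hs₀.1 (by linarith [hs₀.2]))
    positivity
  have hball : ∀ s : ℝ, |s - s₀| < δ₀ → (q + s • (t - q)) ∈ Metric.ball x ε := by
    intro s hs
    rw [Metric.mem_ball, dist_eq_norm]
    have h1 : (q + s • (t - q)) - x = (s - s₀) • (t - q) := by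
      rw [hx, sub_smul]; abel
    rw [h1, norm_smul, Real.norm_eq_abs]
    have h2 : |s - s₀| < ε / (‖t - q‖ + 1) := lt_of_lt_of_le hs (min_le_right _ _)
    have h3 : 0 < ε / (‖t - q‖ + 1) := by positivity
    have h4 : (0:ℝ) ≤ ‖t - q‖ := norm_nonneg _
    calc |s - s₀| * ‖t - q‖ ≤ |s - s₀| * (‖t - q‖ + 1) := by nlinarith [abs_nonneg (s - s₀)]
      _ < (ε / (‖t - q‖ + 1)) * (‖t - q‖ + 1) := by
          apply mul_lt_mul_of_pos_right h2; linarith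
      _ = ε := by field_simp
  have hIcc : ∀ s : ℝ, |s - s₀| < δ₀ → s ∈ Icc (0:ℝ) 1 := by
    intro s hs
    have h1 : |s - s₀| < min s₀ (1 - s₀) := lt_of_lt_of_le hs (min_le_left _ _)
    rw [abs_sub_lt_iff] at h1
    have h2 := lt_min_iff.mp h1.1
    have h3 := lt_min_iff.mp h1.2
    exact ⟨by linarith [h3.1], by linarith [h2.2]⟩
  have hnonneg : ∀ s : ℝ, |s - s₀| < δ₀ → 0 ≤ (s - s₀) * B := by
    intro s hs
    rw [← hline s]
    apply hemp _ (hball s hs)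
    apply hseg
    rw [segment_eq_image']
    exact ⟨s, hIcc s hs, rfl⟩
  have hB0 : B = 0 := by
    have h1 := hnonneg (s₀ + δ₀ / 2) (by rw [abs_sub_lt_iff]; constructor <;> linarith)
    have h2 := hnonneg (s₀ - δ₀ / 2) (by rw [abs_sub_lt_iff]; constructor <;> linarith)
    simp only [add_sub_cancel_left, sub_sub_cancel_left] at h1 h2
    nlinarith
  obtain ⟨s, hsI, hsint, hsne, hsδ⟩ := happ δ₀ hδ₀pos
  set y : Pt := q + s • (t - q) with hy
  have hyf : ⟪nv, y - x⟫ = 0 := by rw [hline, hB0, mul_zero]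
  have hyball : y ∈ Metric.ball x ε := hball s hsδ
  -- y is in the interior of the body, so a point slightly on the negative side is in the body
  obtain ⟨ρ₁, hρ₁, hρ₁sub⟩ := Metric.isOpen_iff.mp isOpen_interior y hsint
  obtain ⟨ρ₂, hρ₂, hρ₂sub⟩ := Metric.isOpen_iff.mp Metric.isOpen_ball y hyball
  have hnn : (0:ℝ) < ‖nv‖ := norm_pos_iff.mpr hnv
  set τ : ℝ := min ρ₁ ρ₂ / (2 * (‖nv‖ + 1)) with hτ
  have hτpos : 0 < τ := by positivity
  set w : Pt := y - τ • nv with hw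
  have hdist : dist w y < min ρ₁ ρ₂ := by
    rw [dist_eq_norm]
    have h1 : w - y = -(τ • nv) := by rw [hw]; abel
    rw [h1, norm_neg, norm_smul, Real.norm_eq_abs, abs_of_pos hτpos]
    calc τ * ‖nv‖ < τ * (2 * (‖nv‖ + 1)) := by nlinarith
      _ = min ρ₁ ρ₂ := by
        rw [hτ, div_mul_cancel₀]
        exact (by positivity : (0:ℝ) < 2 * (‖nv‖ + 1)).ne'
  have hwbody : w ∈ Q.body := interior_subset (hρ₁sub (by
    rw [Metric.mem_ball]; exact lt_of_lt_of_le hdist (min_le_left _ _)))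
  have hwball : w ∈ Metric.ball x ε := hρ₂sub (by
    rw [Metric.mem_ball]; exact lt_of_lt_of_le hdist (min_le_right _ _))
  have hwf : ⟪nv, w - x⟫ < 0 := by
    have h1 : w - x = (y - x) - τ • nv := by rw [hw]; abel
    rw [h1, inner_sub_right, hyf, real_inner_smul_right, real_inner_self_eq_norm_sq]
    have : 0 < τ * ‖nv‖ ^ 2 := by positivity
    linarith
  exact absurd (hemp w hwball hwbody) (not_le.mpr hwf)

end OneSided

section MainAux

open scoped RealInnerProductSpace
open Metric Set

lemma ball_param (q t : Pt) (s₀ ε : ℝ) (u : ℝ)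
    (hu : |u - s₀| < ε / (‖t - q‖ + 1)) :
    q + u • (t - q) ∈ Metric.ball (q + s₀ • (t - q)) ε := by
  rw [Metric.mem_ball, dist_eq_norm]
  have h1 : (q + u • (t - q)) - (q + s₀ • (t - q)) = (u - s₀) • (t - q) := by
    rw [sub_smul]; abel
  rw [h1, norm_smul, Real.norm_eq_abs]
  have h4 : (0:ℝ) ≤ ‖t - q‖ := norm_nonneg _
  have h5 : (0:ℝ) ≤ |u - s₀| := abs_nonneg _
  have h3 : 0 ≤ ε / (‖t - q‖ + 1) := le_trans h5 hu.le
  calc |u - s₀| * ‖t - q‖ ≤ |u - s₀| * (‖t - q‖ + 1) := by nlinarith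
    _ < (ε / (‖t - q‖ + 1)) * (‖t - q‖ + 1) := by
        apply mul_lt_mul_of_pos_right hu; linarith
    _ = ε := by field_simp

end MainAux

section Main

open scoped RealInnerProductSpace
open Metric Set

/-- In a polygon in general position, if the segment `[q,t]` lies in the
polygon, its open part is not contained in the interior but meets the interior, then
some reflex vertex lies on the open segment. -/
theorem stmt_4 (Q : SimplePolygon) (hcomp : IsCompact Q.body)
    (hgp : Q.GeneralPosition)
    (q t : Pt) (hq : q ∈ Q.body) (ht : t ∈ Q.body)
    (hseg : segment ℝ q t ⊆ Q.body)
    (hnot : ¬ openSegment ℝ q t ⊆ interior Q.body)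
    (hmeet : (openSegment ℝ q t ∩ interior Q.body).Nonempty) :
    ∃ i : Fin Q.n, Q.IsReflex i ∧ Q.v i ∈ openSegment ℝ q t := by
  classical
  have hcl : IsClosed Q.body := hcomp.isClosed
  have hqt : q ≠ t := by
    rintro rfl
    rw [openSegment_same] at hnot hmeet
    obtain ⟨w, hw1, hw2⟩ := hmeet
    rw [mem_singleton_iff] at hw1; subst hw1
    exact hnot (singleton_subset_iff.mpr hw2)
  set U : Set ℝ := (fun s : ℝ => q + s • (t - q)) ⁻¹' (interior Q.body) with hU
  have hUopen : IsOpen U := isOpen_interior.preimage (by fun_prop)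
  obtain ⟨w, hw1, hw2⟩ := hmeet
  rw [openSegment_eq_image'] at hw1
  obtain ⟨a, haI, haw⟩ := hw1
  have haw' : q + a • (t - q) = w := haw
  have haU : a ∈ U := by show q + a • (t - q) ∈ interior Q.body; rw [haw']; exact hw2
  obtain ⟨w', hw1', hw2'⟩ := not_subset.mp hnot
  rw [openSegment_eq_image'] at hw1'
  obtain ⟨b, hbI, hbw⟩ := hw1'
  have hbw' : q + b • (t - q) = w' := hbw
  have hbU : b ∉ U := by
    show ¬ q + b • (t - q) ∈ interior Q.body
    rw [hbw']; exact hw2'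
  obtain ⟨s₀, hs₀I, hs₀U, happ0⟩ := aux_gen U hUopen haU hbU haI hbI
  set x : Pt := q + s₀ • (t - q) with hx
  have hxseg : x ∈ openSegment ℝ q t := by
    rw [openSegment_eq_image']; exact ⟨s₀, hs₀I, rfl⟩
  have hxbody : x ∈ Q.body := hseg (openSegment_subset_segment ℝ q t hxseg)
  have hxnint : x ∉ interior Q.body := hs₀U
  have happ : ∀ δ > 0, ∃ s ∈ Ioo (0:ℝ) 1,
      (q + s • (t - q)) ∈ interior Q.body ∧ s ≠ s₀ ∧ |s - s₀| < δ := by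
    intro δ hδ
    obtain ⟨s, ⟨hsU, hsI⟩, h1, h2⟩ := happ0 δ hδ
    exact ⟨s, hsI, hsU, h1, h2⟩
  by_cases hvert : ∃ j, Q.v j = x
  · -- x is a vertex: it must be reflex
    obtain ⟨j, hj⟩ := hvert
    refine ⟨j, ?_, by rw [hj]; exact hxseg⟩
    intro hLC
    obtain ⟨ε, hε, hconv⟩ := hLC
    rw [hj] at hconv
    have hnq : (0:ℝ) < ‖t - q‖ + 1 := by positivity
    have hδpos : 0 < ε / (‖t - q‖ + 1) := by positivity
    obtain ⟨s, hsI, hsint, hsne, hsδ⟩ := happ _ hδpos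
    have hyball : q + s • (t - q) ∈ Metric.ball x ε := ball_param q t s₀ ε s hsδ
    have key : ∀ s' : ℝ, s' ∈ Icc (0:ℝ) 1 → |s' - s₀| < ε / (‖t - q‖ + 1) →
        ((s < s₀ ∧ s₀ < s') ∨ (s' < s₀ ∧ s₀ < s)) → False := by
      intro s' hs'I hs'δ hord
      have hzbody : q + s' • (t - q) ∈ Q.body := hseg (by
        rw [segment_eq_image']; exact ⟨s', hs'I, rfl⟩)
      have hzC : q + s' • (t - q) ∈ Q.body ∩ Metric.ball x ε :=
        ⟨hzbody, ball_param q t s₀ ε s' hs'δ⟩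
      have hyC : q + s • (t - q) ∈ interior (Q.body ∩ Metric.ball x ε) := by
        rw [interior_inter, Metric.isOpen_ball.interior_eq]
        exact ⟨hsint, hyball⟩
      have hcoef : ∃ c e : ℝ, 0 < c ∧ 0 ≤ e ∧ c + e = 1 ∧ c * s + e * s' = s₀ := by
        rcases hord with ⟨h1, h2⟩ | ⟨h1, h2⟩
        · have hss' : s < s' := lt_trans h1 h2
          refine ⟨(s' - s₀)/(s' - s), (s₀ - s)/(s' - s),
            div_pos (by linarith) (by linarith),
            le_of_lt (div_pos (by linarith) (by linarith)), ?_, ?_⟩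
          · rw [← add_div, show s' - s₀ + (s₀ - s) = s' - s by ring]
            exact div_self (sub_ne_zero.mpr hss'.ne')
          · rw [div_mul_eq_mul_div, div_mul_eq_mul_div, ← add_div,
              div_eq_iff (sub_ne_zero.mpr hss'.ne')]
            ring
        · have hss' : s' < s := lt_trans h1 h2
          refine ⟨(s₀ - s')/(s - s'), (s - s₀)/(s - s'),
            div_pos (by linarith) (by linarith),
            le_of_lt (div_pos (by linarith) (by linarith)), ?_, ?_⟩
          · rw [← add_div, show s₀ - s' + (s - s₀) = s - s' by ring]
            exact div_self (sub_ne_zero.mpr hss'.ne')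
          · rw [div_mul_eq_mul_div, div_mul_eq_mul_div, ← add_div,
              div_eq_iff (sub_ne_zero.mpr hss'.ne')]
            ring
      obtain ⟨c, e, hc, he, hce, hcomb⟩ := hcoef
      have hxcomb : c • (q + s • (t - q)) + e • (q + s' • (t - q)) = x := by
        rw [hx, smul_add, smul_add, smul_smul, smul_smul, add_add_add_comm,
          ← add_smul, hce, one_smul, ← add_smul, hcomb]
      have hmem := hconv.combo_interior_self_mem_interior hyC hzC hc he hce
      rw [hxcomb, interior_inter] at hmem
      exact hxnint hmem.1
    rcases lt_or_gt_of_ne hsne with h | h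
    · -- s < s₀ : take s' slightly above s₀
      set s' := min ((s₀ + 1)/2) (s₀ + ε / (‖t - q‖ + 1) / 2) with hs'
      have hs'gt : s₀ < s' := lt_min (by linarith [hs₀I.2]) (by linarith)
      have hs'le : s' ≤ (s₀ + 1)/2 := min_le_left _ _
      have hs'I : s' ∈ Icc (0:ℝ) 1 := ⟨by linarith [hs₀I.1], by linarith [hs₀I.2]⟩
      have hs'δ : |s' - s₀| < ε / (‖t - q‖ + 1) := by
        rw [abs_of_pos (by linarith)]
        have := min_le_right ((s₀ + 1)/2) (s₀ + ε / (‖t - q‖ + 1) / 2)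
        linarith
      exact key s' hs'I hs'δ (Or.inl ⟨h, hs'gt⟩)
    · -- s₀ < s : take s' slightly below s₀
      set s' := max (s₀/2) (s₀ - ε / (‖t - q‖ + 1) / 2) with hs'
      have hs'lt : s' < s₀ := max_lt (by linarith [hs₀I.1]) (by linarith)
      have hs'ge : s₀/2 ≤ s' := le_max_left _ _
      have hs'I : s' ∈ Icc (0:ℝ) 1 := ⟨by linarith [hs₀I.1], by linarith [hs₀I.2]⟩
      have hs'δ : |s' - s₀| < ε / (‖t - q‖ + 1) := by
        rw [abs_sub_lt_iff]
        have := le_max_right (s₀/2) (s₀ - ε / (‖t - q‖ + 1) / 2)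
        constructor <;> linarith
      exact key s' hs'I hs'δ (Or.inr ⟨hs'lt, h⟩)
  · -- x is not a vertex : contradiction
    exfalso
    push_neg at hvert
    have hxbd : x ∈ Q.bdry := by
      by_contra hc
      exact hxnint (Q.mem_interior_of_not_bdry hxbody hc)
    obtain ⟨i, hxi⟩ : ∃ i, x ∈ Q.edge i := by
      rwa [SimplePolygon.bdry, mem_iUnion] at hxbd
    have hxonly : ∀ j, j ≠ i → x ∉ Q.edge j := by
      intro j hj hxj
      by_cases h1 : j = nxt i
      · have hadj := Q.adj i
        have hx' : x ∈ segment ℝ (Q.v i) (Q.v (nxt i)) ∩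
            segment ℝ (Q.v (nxt i)) (Q.v (nxt (nxt i))) := ⟨hxi, by rw [h1] at hxj; exact hxj⟩
        rw [hadj, mem_singleton_iff] at hx'
        exact hvert (nxt i) hx'.symm
      · by_cases h2 : i = nxt j
        · have hadj := Q.adj j
          have hx' : x ∈ segment ℝ (Q.v j) (Q.v (nxt j)) ∩
              segment ℝ (Q.v (nxt j)) (Q.v (nxt (nxt j))) := ⟨hxj, by rw [← h2]; exact hxi⟩
          rw [hadj, mem_singleton_iff] at hx'
          rw [← h2] at hx'
          exact hvert i hx'.symm
        · have hemp := Q.nonadj i j (Ne.symm hj) h1 h2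
          have hmemp : x ∈ segment ℝ (Q.v i) (Q.v (nxt i)) ∩
              segment ℝ (Q.v j) (Q.v (nxt j)) := ⟨hxi, hxj⟩
          rw [hemp] at hmemp
          exact Set.notMem_empty x hmemp
    set d : Pt := Q.v (nxt i) - Q.v i with hd
    have hdne : d ≠ 0 := sub_ne_zero.mpr
      (fun hc => (nxt_ne' (by have := Q.hn; omega) i) (Q.inj hc))
    set nv : Pt := WithLp.toLp 2 ![-(d 1), d 0] with hnv
    have hnv0 : nv ≠ 0 := by
      intro hc
      apply hdne
      have h0 : d 0 = 0 := by
        have := congrArg (fun p : Pt => p 1) hc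
        simpa [hnv] using this
      have h1 : d 1 = 0 := by
        have := congrArg (fun p : Pt => p 0) hc
        simp [hnv] at this
        simpa using this
      ext k; fin_cases k <;> simp [h0, h1]
    have hnvd : ⟪nv, d⟫ = 0 := by
      simp [PiLp.inner_apply, Fin.sum_univ_two, hnv]
      ring
    have hvinX : ⟪nv, Q.v i - x⟫ = 0 := by
      have hxi' := hxi
      rw [SimplePolygon.edge, segment_eq_image'] at hxi'
      obtain ⟨u, huI, hux⟩ := hxi'
      have h1 : Q.v i - x = -(u • d) := by rw [← hux, hd]; beta_reduce; module
      rw [h1, inner_neg_right, real_inner_smul_right, hnvd, mul_zero, neg_zero]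
    have hedge_line : Q.edge i ⊆ {z : Pt | ⟪nv, z - x⟫ = 0} := by
      rw [SimplePolygon.edge]
      apply (hyperplane_convex nv x).segment_subset
      · exact hvinX
      · show ⟪nv, Q.v (nxt i) - x⟫ = 0
        have h1 : Q.v (nxt i) - x = (Q.v i - x) + d := by rw [hd]; abel
        rw [h1, inner_add_right, hvinX, hnvd, add_zero]
    have hKcl : IsClosed (⋃ j ∈ ({i}ᶜ : Set (Fin Q.n)), Q.edge j) :=
      (Set.toFinite _).isClosed_biUnion (fun j _ => Q.edge_closed j)
    have hxK : x ∉ ⋃ j ∈ ({i}ᶜ : Set (Fin Q.n)), Q.edge j := by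
      rw [mem_iUnion₂]
      rintro ⟨j, hj, hxj⟩
      exact hxonly j hj hxj
    obtain ⟨ε₀, hε₀, hball₀⟩ := Metric.isOpen_iff.mp hKcl.isOpen_compl x hxK
    have hbd : Q.bdry ∩ Metric.ball x ε₀ ⊆ {z : Pt | ⟪nv, z - x⟫ = 0} := by
      rintro z ⟨hzb, hzball⟩
      rw [SimplePolygon.bdry, mem_iUnion] at hzb
      obtain ⟨j, hzj⟩ := hzb
      by_cases hji : j = i
      · exact hedge_line (hji ▸ hzj)
      · exact absurd (mem_iUnion₂.mpr ⟨j, hji, hzj⟩) (hball₀ hzball)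
    by_cases hplus : ∃ w ∈ Metric.ball x ε₀, w ∈ Q.body ∧ 0 < ⟪nv, w - x⟫
    · by_cases hminus : ∃ w ∈ Metric.ball x ε₀, w ∈ Q.body ∧ ⟪nv, w - x⟫ < 0
      · obtain ⟨w₁, hw₁b, hw₁bd, hw₁f⟩ := hplus
        obtain ⟨w₂, hw₂b, hw₂bd, hw₂f⟩ := hminus
        have hpos := half_subset_body Q x ε₀ nv hbd w₁ hw₁b hw₁bd hw₁f
        have hbd' : Q.bdry ∩ Metric.ball x ε₀ ⊆ {z : Pt | ⟪-nv, z - x⟫ = 0} := by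
          intro z hz
          show ⟪-nv, z - x⟫ = 0
          rw [inner_neg_left, hbd hz, neg_zero]
        have hneg := half_subset_body Q x ε₀ (-nv) hbd' w₂ hw₂b hw₂bd
          (by rw [inner_neg_left]; linarith)
        have hballbody : Metric.ball x ε₀ ⊆ Q.body := by
          intro z hz
          rcases lt_trichotomy (⟪nv, z - x⟫) 0 with h | h | h
          · exact hneg z hz (by rw [inner_neg_left]; linarith)
          · have hcl₂ := near_line_closure x ε₀ nv hnv0 hz h
            have hsub : Metric.ball x ε₀ ∩ {y : Pt | 0 < ⟪nv, y - x⟫} ⊆ Q.body :=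
              fun y hy => hpos y hy.1 hy.2
            exact closure_minimal hsub hcl hcl₂
          · exact hpos z hz h
        have hxint : x ∈ interior Q.body := mem_interior.mpr
          ⟨Metric.ball x ε₀, hballbody, Metric.isOpen_ball, Metric.mem_ball_self hε₀⟩
        exact hxnint hxint
      · push_neg at hminus
        exact onesided Q q t hseg nv hnv0 ε₀ hε₀ s₀ hs₀I happ hminus
    · push_neg at hplus
      have hemp : ∀ w ∈ Metric.ball x ε₀, w ∈ Q.body → 0 ≤ ⟪-nv, w - x⟫ := by
        intro w hw hwb
        rw [inner_neg_left]
        linarith [hplus w hw hwb]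
      exact onesided Q q t hseg (-nv) (neg_ne_zero.mpr hnv0) ε₀ hε₀ s₀ hs₀I happ hemp

end Main
end
end

section
/- Let d > 0 and let C ⊆ ℝ² be a convex set containing points a, b, c such that dist a b ≥ d and the distance from c to the affine span of {a, b} is at least d. Then the Lebesgue measure (volume) of C is at least d²/2. -/
open scoped RealInnerProductSpace symmDiff
open Metric Set MeasureTheory

noncomputable section

open scoped Pointwise


noncomputable def shearMap (u w : Pt) : Pt →ₗ[ℝ] Pt where
  toFun x := x 0 • u + x 1 • w
  map_add' x y := by
    simp only [PiLp.add_apply, add_smul]; abel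
  map_smul' s x := by
    simp only [PiLp.smul_apply, smul_eq_mul, RingHom.id_apply, smul_add, mul_smul]

lemma det_shearMap (u w : Pt) :
    LinearMap.det (shearMap u w) = u 0 * w 1 - u 1 * w 0 := by
  rw [← LinearMap.det_toMatrix (EuclideanSpace.basisFun (Fin 2) ℝ).toBasis,
    Matrix.det_fin_two]
  simp [LinearMap.toMatrix_apply, shearMap, EuclideanSpace.basisFun_apply]
  ring

lemma tri_lower :
    ENNReal.ofReal (1/2) ≤ volume {x : Pt | 0 ≤ x 0 ∧ 0 ≤ x 1 ∧ x 0 + x 1 ≤ 1} := by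
  have mp := (volume_preserving_finTwoArrow ℝ).comp
    (EuclideanSpace.volume_preserving_symm_measurableEquiv_toLp (Fin 2))
  set S : Set (ℝ × ℝ) := {p | 0 ≤ p.1 ∧ 0 ≤ p.2 ∧ p.1 + p.2 ≤ 1} with hS
  have hSm : MeasurableSet S := by
    apply MeasurableSet.inter (measurableSet_le measurable_const measurable_fst)
    exact MeasurableSet.inter (measurableSet_le measurable_const measurable_snd)
      (measurableSet_le (measurable_fst.add measurable_snd) measurable_const)
  have hpre : (MeasurableEquiv.finTwoArrow ∘ (MeasurableEquiv.toLp 2 (Fin 2 → ℝ)).symm) ⁻¹' S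
      = {x : Pt | 0 ≤ x 0 ∧ 0 ≤ x 1 ∧ x 0 + x 1 ≤ 1} := rfl
  rw [← hpre, mp.measure_preimage hSm.nullMeasurableSet]
  have hsub : regionBetween (fun _ => (0:ℝ)) (fun x => 1 - x) (Ioo 0 1) ⊆ S := by
    rintro ⟨x, y⟩ ⟨hx, hy⟩
    simp only [mem_Ioo] at hx hy
    exact ⟨hx.1.le, hy.1.le, by linarith [hy.2]⟩
  refine le_trans ?_ (measure_mono hsub)
  rw [Measure.volume_eq_prod]
  rw [volume_regionBetween_eq_integral (g := fun x : ℝ => 1 - x)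
    (integrableOn_const (hs := measure_Ioo_lt_top.ne))
    (((continuous_const.sub continuous_id').integrableOn_Icc (a := 0) (b := 1)).mono_set Ioo_subset_Icc_self)
    measurableSet_Ioo (fun x hx => by simp [mem_Ioo] at hx; linarith [hx.2])]
  apply le_of_eq
  congr 1
  rw [← integral_Ioc_eq_integral_Ioo, ← intervalIntegral.integral_of_le (by norm_num : (0:ℝ) ≤ 1)]
  simp [intervalIntegral.integral_sub intervalIntegrable_const intervalIntegral.intervalIntegrable_id,
    integral_id]
  norm_num

/-- A convex set in the plane containing two points at distance at least `d`
and a third point at distance at least `d` from the line through them has area at least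
`d²/2`. -/
theorem stmt_9 (d : ℝ) (hd : 0 < d) (C : Set Pt) (hC : Convex ℝ C)
    (a b c : Pt) (ha : a ∈ C) (hb : b ∈ C) (hc : c ∈ C)
    (hab : d ≤ dist a b)
    (hdist : d ≤ Metric.infDist c ((affineSpan ℝ ({a, b} : Set Pt) : Set Pt))) :
    ENNReal.ofReal (d ^ 2 / 2) ≤ volume C := by
  set u : Pt := b - a with hu_def
  set w : Pt := c - a with hw_def
  have hnu : d ≤ ‖u‖ := by rwa [hu_def, ← dist_eq_norm, dist_comm]
  have hnu0 : (0:ℝ) < ‖u‖ := lt_of_lt_of_le hd hnu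
  -- coordinates
  have hinner : ∀ x y : Pt, ⟪x, y⟫ = x 0 * y 0 + x 1 * y 1 := fun x y => by
    simp [PiLp.inner_apply, Fin.sum_univ_two, RCLike.inner_apply]
    ring
  set t : ℝ := ⟪u, w⟫ / ‖u‖ ^ 2 with ht_def
  set vv : Pt := w - t • u with hvv_def
  have hp : (AffineMap.lineMap a b) t ∈ affineSpan ℝ ({a, b} : Set Pt) :=
    AffineMap.lineMap_mem_affineSpan_pair t a b
  have hnv : d ≤ ‖vv‖ := by
    refine le_trans hdist (le_trans (Metric.infDist_le_dist_of_mem hp) (le_of_eq ?_))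
    rw [dist_eq_norm, AffineMap.lineMap_apply]
    congr 1
    simp only [hvv_def, hw_def, hu_def, vsub_eq_sub, vadd_eq_add]
    abel
  set D : ℝ := u 0 * w 1 - u 1 * w 0 with hD_def
  have hnusq : ‖u‖ ^ 2 = u 0 ^ 2 + u 1 ^ 2 := by
    rw [← real_inner_self_eq_norm_sq, hinner]; ring
  have hnu2 : u 0 ^ 2 + u 1 ^ 2 ≠ 0 := by rw [← hnusq]; positivity
  have key : ‖u‖ ^ 2 * ‖vv‖ ^ 2 = D ^ 2 := by
    rw [← real_inner_self_eq_norm_sq vv, hinner]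
    simp only [hvv_def, PiLp.sub_apply, PiLp.smul_apply, smul_eq_mul, ht_def, hinner, hnusq]
    field_simp
    ring
  have hd2 : d ^ 2 ≤ |D| := by
    have h1 : d ^ 2 ≤ ‖u‖ * ‖vv‖ := by nlinarith
    nlinarith [abs_nonneg D, sq_abs D, norm_nonneg u, norm_nonneg vv]
  set T0 : Set Pt := {x : Pt | 0 ≤ x 0 ∧ 0 ≤ x 1 ∧ x 0 + x 1 ≤ 1} with hT0
  have hsub : (fun y : Pt => a + y) '' ((shearMap u w) '' T0) ⊆ C := by
    rintro _ ⟨_, ⟨x, hx, rfl⟩, rfl⟩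
    obtain ⟨hx0, hx1, hx2⟩ := hx
    have hmem := hC.sum_mem (t := (Finset.univ : Finset (Fin 3)))
      (w := ![1 - x 0 - x 1, x 0, x 1]) (z := ![a, b, c])
      (fun i _ => by fin_cases i <;> simp <;> linarith)
      (by simp [Fin.sum_univ_three]; ring)
      (fun i _ => by fin_cases i <;> simpa using by first | exact ha | exact hb | exact hc)
    rw [Fin.sum_univ_three] at hmem
    simp only [Matrix.cons_val_zero, Matrix.cons_val_one, Matrix.head_cons,
      Matrix.cons_val_two, Matrix.tail_cons] at hmem
    have heq : a + (shearMap u w) x = (1 - x 0 - x 1) • a + x 0 • b + x 1 • c := by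
      show a + (x 0 • u + x 1 • w) = _
      rw [hu_def, hw_def]
      simp only [smul_sub, sub_smul, one_smul]
      abel
    show a + (shearMap u w) x ∈ C
    rwa [heq]
  have hvol : volume ((fun y : Pt => a + y) '' ((shearMap u w) '' T0))
      = ENNReal.ofReal |D| * volume T0 := by
    have h1 : (fun y : Pt => a + y) '' ((shearMap u w) '' T0) = a +ᵥ ((shearMap u w) '' T0) := by
      rw [← Set.image_vadd]; rfl
    rw [h1, measure_vadd, Measure.addHaar_image_linearMap, det_shearMap]
  calc ENNReal.ofReal (d ^ 2 / 2) = ENNReal.ofReal (d ^ 2) * ENNReal.ofReal (1 / 2) := by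
        rw [← ENNReal.ofReal_mul (by positivity), mul_one_div]
    _ ≤ ENNReal.ofReal |D| * volume T0 :=
        mul_le_mul' (ENNReal.ofReal_le_ofReal hd2) tri_lower
    _ = volume ((fun y : Pt => a + y) '' ((shearMap u w) '' T0)) := hvol.symm
    _ ≤ volume C := measure_mono hsub
end
end

section
/- Let P be a simple polygon in ℝ² with vertex map v : Fin n → ℝ². Then the metric diameter of P satisfies Metric.diam P ≤ (1/2) · ∑ i, dist (v i) (v (i+1 mod n)), i.e., the diameter of the polygon body is at most half its perimeter. -/
open scoped RealInnerProductSpace symmDiff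
open Metric Set MeasureTheory

noncomputable section

section Aux

open SimplePolygon Bornology
open Fin.NatCast Fin.CommRing

lemma nxt_eq_add_one' {n : ℕ} [NeZero n] (hn : 2 ≤ n) (i : Fin n) : nxt i = i + 1 := by
  ext
  rw [nxt, Fin.val_add, Fin.val_one' n, Nat.mod_eq_of_lt (show 1 < n by omega)]

lemma two_dist_le_perim (Q : SimplePolygon) [NeZero Q.n] (i j : Fin Q.n) :
    2 * dist (Q.v i) (Q.v j) ≤ ∑ k, dist (Q.v k) (Q.v (k + 1)) := by
  set F : Fin Q.n → ℝ := fun k => dist (Q.v k) (Q.v (k + 1)) with hF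
  obtain ⟨m, rfl⟩ : ∃ m : Fin Q.n, j = i + m := ⟨j - i, by ring⟩
  have key : ∀ (a : Fin Q.n) (N : ℕ), dist (Q.v a) (Q.v (a + (N : Fin Q.n))) ≤
      ∑ k ∈ Finset.range N, F (a + (k : Fin Q.n)) := by
    intro a N
    have h := dist_le_range_sum_dist (fun k : ℕ => Q.v (a + (k : Fin Q.n))) N
    have e : ∀ k : ℕ, dist (Q.v (a + (k : Fin Q.n))) (Q.v (a + ((k + 1 : ℕ) : Fin Q.n)))
        = F (a + (k : Fin Q.n)) := by
      intro k
      simp only [hF, Nat.cast_add, Nat.cast_one, add_assoc]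
    simpa only [Nat.cast_zero, add_zero, e] using h
  have h1 : dist (Q.v i) (Q.v (i + m)) ≤ ∑ k ∈ Finset.range m.1, F (i + (k : Fin Q.n)) := by
    have h := key i m.1
    rwa [Fin.cast_val_eq_self] at h
  have h2 : dist (Q.v (i + m)) (Q.v i) ≤
      ∑ k ∈ Finset.range (Q.n - m.1), F (i + m + (k : Fin Q.n)) := by
    have h := key (i + m) (Q.n - m.1)
    have e : ((Q.n - m.1 : ℕ) : Fin Q.n) = -m := by
      rw [Nat.cast_sub m.isLt.le, Fin.natCast_self, Fin.cast_val_eq_self, zero_sub]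
    rwa [e, add_assoc, add_neg_cancel, add_zero] at h
  have hsplit : ∑ k ∈ Finset.range m.1, F (i + (k : Fin Q.n)) +
      ∑ k ∈ Finset.range (Q.n - m.1), F (i + m + (k : Fin Q.n)) =
      ∑ k ∈ Finset.range Q.n, F (i + (k : Fin Q.n)) := by
    have h := Finset.sum_range_add (fun k : ℕ => F (i + (k : Fin Q.n))) m.1 (Q.n - m.1)
    rw [Nat.add_sub_cancel' m.isLt.le] at h
    rw [h]
    congr 1
    refine Finset.sum_congr rfl fun k _ => ?_
    congr 1
    push_cast
    rw [add_assoc]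
  have htot : ∑ k ∈ Finset.range Q.n, F (i + (k : Fin Q.n)) = ∑ k, F k := by
    rw [← Fin.sum_univ_eq_sum_range (fun k : ℕ => F (i + (k : Fin Q.n))) Q.n]
    simp only [Fin.cast_val_eq_self]
    exact Fintype.sum_equiv (Equiv.addLeft i) _ _ fun k => rfl
  have hd : dist (Q.v i) (Q.v (i + m)) = dist (Q.v (i + m)) (Q.v i) := dist_comm _ _
  calc 2 * dist (Q.v i) (Q.v (i + m))
      = dist (Q.v i) (Q.v (i + m)) + dist (Q.v (i + m)) (Q.v i) := by rw [← hd]; ring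
    _ ≤ ∑ k ∈ Finset.range m.1, F (i + (k : Fin Q.n)) +
        ∑ k ∈ Finset.range (Q.n - m.1), F (i + m + (k : Fin Q.n)) := add_le_add h1 h2
    _ = ∑ k, F k := by rw [hsplit, htot]

lemma body_subset_hull (Q : SimplePolygon) :
    Q.body ⊆ convexHull ℝ (Set.range Q.v) := by
  set H := convexHull ℝ (Set.range Q.v) with hH
  have hbd : Q.bdry ⊆ H := by
    intro x hx
    obtain ⟨i, hi⟩ := mem_iUnion.1 hx
    exact (convex_convexHull ℝ _).segment_subset
      (subset_convexHull ℝ (Set.range Q.v) (Set.mem_range_self i))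
      (subset_convexHull ℝ (Set.range Q.v) (Set.mem_range_self (nxt i))) hi
  rintro z (hz | ⟨hz, hb⟩)
  · exact hbd hz
  by_contra hzH
  have hHcl : IsClosed H := (Set.finite_range Q.v).isClosed_convexHull ℝ
  obtain ⟨f, u, hfa, hfz⟩ :=
    geometric_hahn_banach_closed_point (convex_convexHull ℝ _) hHcl hzH
  set p0 := Q.v ⟨0, by have := Q.hn; omega⟩ with hp0def
  have hp0 : p0 ∈ H := subset_convexHull ℝ _ ⟨_, rfl⟩
  have hpos : 0 < f z - f p0 := by have := hfa p0 hp0; linarith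
  set d : Pt := (f z - f p0)⁻¹ • (z - p0) with hd
  have hfd : f d = 1 := by
    rw [hd, f.map_smul, f.map_sub, smul_eq_mul, inv_mul_cancel₀ (ne_of_gt hpos)]
  have hdne : d ≠ 0 := by
    intro h
    rw [h, f.map_zero] at hfd
    exact one_ne_zero hfd.symm
  have hdnorm : 0 < ‖d‖ := norm_pos_iff.2 hdne
  set S : Set Pt := (fun t : ℝ => z + t • d) '' Ici 0 with hS
  have hzS : z ∈ S := ⟨0, Set.self_mem_Ici, by simp⟩
  have hScon : IsPreconnected S :=
    isPreconnected_Ici.image _ (Continuous.continuousOn (by continuity))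
  have hSsub : S ⊆ Q.bdryᶜ := by
    rintro _ ⟨t, ht, rfl⟩ hmem
    have h1 : f (z + t • d) < u := hfa _ (hbd hmem)
    rw [f.map_add, f.map_smul, hfd, smul_eq_mul, mul_one] at h1
    have ht' : (0 : ℝ) ≤ t := ht
    linarith
  have hcompS : S ⊆ connectedComponentIn Q.bdryᶜ z :=
    hScon.subset_connectedComponentIn hzS hSsub
  have hSb : IsBounded S := hb.subset hcompS
  obtain ⟨C, hC⟩ := isBounded_iff_forall_norm_le.1 hSb
  set t : ℝ := (C + ‖z‖ + 1) / ‖d‖ with htdef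
  have hCz : 0 ≤ C + ‖z‖ := by
    have h1 := hC z hzS
    have h2 := norm_nonneg z
    linarith
  have ht0 : 0 ≤ t := by positivity
  have hmem : z + t • d ∈ S := ⟨t, ht0, rfl⟩
  have hnorm : ‖t • d‖ ≤ ‖z + t • d‖ + ‖z‖ := by
    have h := norm_sub_le (z + t • d) z
    simpa using h
  have htd : ‖t • d‖ = C + ‖z‖ + 1 := by
    rw [norm_smul, Real.norm_eq_abs, abs_of_nonneg ht0, htdef,
      div_mul_cancel₀ _ (ne_of_gt hdnorm)]
  have hle := hC _ hmem
  rw [htd] at hnorm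
  linarith

end Aux

/-- The diameter of the polygon body is at most half its perimeter. -/
theorem stmt_13 (Q : SimplePolygon) (hcomp : IsCompact Q.body) :
    Metric.diam Q.body ≤ (1 / 2) * ∑ i, dist (Q.v i) (Q.v (nxt i)) := by
  haveI : NeZero Q.n := ⟨by have := Q.hn; omega⟩
  have hsum : ∑ i, dist (Q.v i) (Q.v (nxt i)) = ∑ i, dist (Q.v i) (Q.v (i + 1)) :=
    Finset.sum_congr rfl fun i _ => by
      rw [nxt_eq_add_one' (by have := Q.hn; omega)]
  rw [hsum]
  have hnn : 0 ≤ (1 / 2 : ℝ) * ∑ i, dist (Q.v i) (Q.v (i + 1)) := by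
    have h : (0 : ℝ) ≤ ∑ i, dist (Q.v i) (Q.v (i + 1)) :=
      Finset.sum_nonneg fun _ _ => dist_nonneg
    linarith
  apply Metric.diam_le_of_forall_dist_le hnn
  intro p hp q hq
  obtain ⟨a, ⟨ia, rfl⟩, b, ⟨ib, rfl⟩, hab⟩ :=
    convexHull_exists_dist_ge2 (body_subset_hull Q hp) (body_subset_hull Q hq)
  have h := two_dist_le_perim Q ia ib
  linarith
end
end
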